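/- Let K be a field equipped with a nonarchimedean absolute value |·|_v, let d ≥ 2 be an integer, and let α, β ∈ K with |α|_v = |β|_v > 1 and |β^d − α^d|_v = |α|_v. Suppose γ₀, γ₁ ∈ K satisfy: |β^d − α^d − γ₀·α|_v < |α|_v; (γ₀ + γ₁)^d = 1; γ₁^d ≠ 1; |γ₁|_v ≤ 1; and |γ₁^d − 1|_v = 1. Set λ₁ = γ₁·α − α^d. Then the sequence n ↦ log⁺|f_{λ₁}^n(α)|_v / d^n converges to (log|α|_v)/d, while every limit c of the sequence n ↦ log⁺|f_{λ₁}^n(β)|_v / d^n satisfies c < (log|α|_v)/d; in particular the β-sequence does not converge to (log|α|_v)/d. -/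

import Mathlib

open Filter

/-- Suppose `|α|_v = |β|_v > 1`, `|β^d - α^d|_v = |α|_v`, and `γ₀, γ₁` satisfy
`|β^d - α^d - γ₀·α|_v < |α|_v`, `(γ₀ + γ₁)^d = 1`, `γ₁^d ≠ 1`, `|γ₁|_v ≤ 1`, `|γ₁^d - 1|_v = 1`.
With `λ₁ = γ₁·α - α^d`, the local height sequence of `α` converges to `(log|α|_v)/d`, while any
limit of the local height sequence of `β` is strictly smaller; in particular the `β`-sequence
does not converge to `(log|α|_v)/d`. -/
theorem local_heights_differ_of_equal_difference
    (K : Type*) [Field K] (v : AbsoluteValue K ℝ) (hv : IsNonarchimedean v)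
    (d : ℕ) (hd : 2 ≤ d) (α β γ₀ γ₁ : K)
    (heq : v α = v β) (hbig : 1 < v α)
    (hdiff : v (β ^ d - α ^ d) = v α)
    (hγ₀ : v (β ^ d - α ^ d - γ₀ * α) < v α)
    (hroot : (γ₀ + γ₁) ^ d = 1) (hnotroot : γ₁ ^ d ≠ 1)
    (hγ₁int : v γ₁ ≤ 1) (hγ₁unit : v (γ₁ ^ d - 1) = 1) :
    Tendsto (fun n : ℕ =>
        Real.log (max (v ((fun x : K => x ^ d + (γ₁ * α - α ^ d))^[n] α)) 1) / (d : ℝ) ^ n)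
      atTop (nhds (Real.log (v α) / d)) ∧
    (∀ c : ℝ,
      Tendsto (fun n : ℕ =>
          Real.log (max (v ((fun x : K => x ^ d + (γ₁ * α - α ^ d))^[n] β)) 1) / (d : ℝ) ^ n)
        atTop (nhds c) → c < Real.log (v α) / d) ∧
    ¬ Tendsto (fun n : ℕ =>
        Real.log (max (v ((fun x : K => x ^ d + (γ₁ * α - α ^ d))^[n] β)) 1) / (d : ℝ) ^ n)
      atTop (nhds (Real.log (v α) / d)) := by
  have hd0 : d ≠ 0 := by omega
  have hdR : (1:ℝ) < (d:ℝ) := by exact_mod_cast (by omega : 1 < d)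
  have hα0 : 0 < v α := lt_trans one_pos hbig
  set lam : K := γ₁ * α - α ^ d with hlamdef
  set g : K → K := fun x => x ^ d + lam with hgdef
  have hgx : ∀ x : K, g x = x ^ d + lam := fun _ => rfl
  have hαd : v α < v α ^ d := by
    calc v α = v α ^ 1 := (pow_one _).symm
    _ < v α ^ d := pow_lt_pow_right₀ hbig (by omega)
  -- nonarchimedean addition with strict inequality
  have hadd : ∀ a b : K, v b < v a → v (a + b) = v a := by
    intro a b h
    refine le_antisymm ((hv a b).trans (max_le le_rfl h.le)) ?_
    have h2 : v a ≤ max (v (a + b)) (v b) := by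
      have h3 := hv (a + b) (-b)
      simpa using h3
    exact (le_max_iff.mp h2).resolve_right (not_le.mpr h)
  have hγ₁α : v (γ₁ * α) ≤ v α := by
    rw [map_mul]; exact mul_le_of_le_one_left hα0.le hγ₁int
  have hvlam : v lam = v α ^ d := by
    have h1 : lam = -(α ^ d) + γ₁ * α := by rw [hlamdef]; ring
    rw [h1, hadd _ _ (by rw [v.map_neg, map_pow]; exact lt_of_le_of_lt hγ₁α hαd),
      v.map_neg, map_pow]
  have hstep : ∀ y : K, v α < v y → v (g y) = v y ^ d := by
    intro y hy
    rw [hgx, hadd _ _ (by rw [hvlam, map_pow]; exact pow_lt_pow_left₀ hy hα0.le hd0), map_pow]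
  have hesc : ∀ y : K, v α < v y → ∀ k, v (g^[k] y) = v y ^ d ^ k ∧ v α < v (g^[k] y) := by
    intro y hy k
    induction k with
    | zero => simpa using hy
    | succ k ih =>
      have h1 : 1 < v (g^[k] y) := lt_trans hbig ih.2
      rw [Function.iterate_succ_apply', hstep _ ih.2]
      constructor
      · rw [ih.1, ← pow_mul, pow_succ]
      · exact lt_of_lt_of_le ih.2 (le_self_pow₀ h1.le hd0)
  -- limit at an escape point
  have hlim : ∀ (x : K) (n : ℕ), v α < v (g^[n] x) →
      Tendsto (fun k : ℕ => Real.log (max (v (g^[k] x)) 1) / (d : ℝ) ^ k) atTop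
        (nhds (Real.log (v (g^[n] x)) / (d : ℝ) ^ n)) := by
    intro x n hx
    have hV1 : 1 < v (g^[n] x) := lt_trans hbig hx
    have heqv : (fun _ : ℕ => Real.log (v (g^[n] x)) / (d:ℝ) ^ n) =ᶠ[atTop]
        (fun k : ℕ => Real.log (max (v (g^[k] x)) 1) / (d : ℝ) ^ k) := by
      filter_upwards [eventually_ge_atTop n] with k hk
      have h1 : g^[k] x = g^[k - n] (g^[n] x) := by
        rw [← Function.iterate_add_apply]
        congr 1
        omega
      have h2 : v (g^[k] x) = v (g^[n] x) ^ d ^ (k - n) := by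
        rw [h1]; exact (hesc _ hx (k - n)).1
      have h3 : (1:ℝ) < v (g^[n] x) ^ d ^ (k - n) := one_lt_pow₀ hV1 (pow_ne_zero _ hd0)
      rw [h2, max_eq_left h3.le, Real.log_pow]
      rw [show (d:ℝ) ^ k = (d:ℝ) ^ (k - n) * (d:ℝ) ^ n by rw [← pow_add]; congr 1; omega]
      push_cast
      rw [mul_div_mul_left _ _ (by positivity : ((d:ℝ) ^ (k - n)) ≠ 0)]
    exact tendsto_const_nhds.congr' heqv
  -- α part
  have hα2 : g^[2] α = (γ₁ ^ d - 1) * α ^ d + γ₁ * α := by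
    have h1 : g^[2] α = g (g α) := by rw [Function.iterate_succ_apply', Function.iterate_one]
    rw [h1, hgx, hgx, hlamdef]
    ring
  have hvα2 : v (g^[2] α) = v α ^ d := by
    have ha : v ((γ₁ ^ d - 1) * α ^ d) = v α ^ d := by
      rw [map_mul, map_pow, hγ₁unit, one_mul]
    rw [hα2, hadd _ _ (by rw [ha]; exact lt_of_le_of_lt hγ₁α hαd), ha]
  have hα2big : v α < v (g^[2] α) := by rw [hvα2]; exact hαd
  have partα : Tendsto (fun n : ℕ => Real.log (max (v (g^[n] α)) 1) / (d:ℝ) ^ n) atTop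
      (nhds (Real.log (v α) / d)) := by
    have h := hlim α 2 hα2big
    have he : Real.log (v (g^[2] α)) / (d:ℝ) ^ 2 = Real.log (v α) / d := by
      rw [hvα2, Real.log_pow]
      have : (d:ℝ) ≠ 0 := by positivity
      field_simp
    rwa [he] at h
  -- β : first step
  have hgβ : g β = (γ₀ + γ₁) * α + (β ^ d - α ^ d - γ₀ * α) := by
    rw [hgx, hlamdef]; ring
  have hγsum : v (γ₀ + γ₁) = 1 := by
    have h1 : v (γ₀ + γ₁) ^ d = 1 := by rw [← map_pow, hroot, map_one]
    rcases lt_trichotomy (v (γ₀ + γ₁)) 1 with h | h | h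
    · have := pow_lt_one₀ (v.nonneg _) h hd0
      rw [h1] at this; exact absurd this (lt_irrefl _)
    · exact h
    · have := one_lt_pow₀ h hd0
      rw [h1] at this; exact absurd this (lt_irrefl _)
  have hvgβ : v (g β) = v α := by
    rw [hgβ, hadd _ _ (by rw [map_mul, hγsum, one_mul]; exact hγ₀), map_mul, hγsum, one_mul]
  -- nonarchimedean bound on finite sums
  have hsum : ∀ (s : Finset ℕ) (f : ℕ → K) (C : ℝ), 0 ≤ C →
      (∀ i ∈ s, v (f i) ≤ C) → v (∑ i ∈ s, f i) ≤ C := by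
    intro s f C hC
    induction s using Finset.induction_on with
    | empty => intro _; simpa using hC
    | @insert _ _ hni ih =>
      intro h
      rw [Finset.sum_insert hni]
      exact (hv _ _).trans (max_le (h _ (Finset.mem_insert_self _ _))
        (ih fun i hi => h i (Finset.mem_insert_of_mem hi)))
  -- strict bound at step 2 for β
  have hβ2lt : v (g^[2] β) < v α ^ d := by
    set u : K := (γ₀ + γ₁) * α with hu
    set ε : K := β ^ d - α ^ d - γ₀ * α with he
    have hud : u ^ d = α ^ d := by rw [hu, mul_pow, hroot, one_mul]
    have h2 : g^[2] β = ((u + ε) ^ d - u ^ d) + γ₁ * α := by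
      have h1 : g^[2] β = g (g β) := by rw [Function.iterate_succ_apply', Function.iterate_one]
      rw [h1, hgβ, hgx, hlamdef]
      linear_combination hud
    have hvu : v u = v α := by rw [hu, map_mul, hγsum, one_mul]
    have hvuε : v (u + ε) = v α := by rw [← hgβ]; exact hvgβ
    have hdiffbound : v ((u + ε) ^ d - u ^ d) < v α ^ d := by
      have hgeom : (∑ i ∈ Finset.range d, (u + ε) ^ i * u ^ (d - 1 - i)) * ((u + ε) - u)
          = (u + ε) ^ d - u ^ d := geom_sum₂_mul _ _ d
      have hε : (u + ε) - u = ε := by ring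
      rw [← hgeom, hε, map_mul]
      have hsle : v (∑ i ∈ Finset.range d, (u + ε) ^ i * u ^ (d - 1 - i)) ≤ v α ^ (d - 1) := by
        refine hsum _ _ _ (by positivity) ?_
        intro i hi
        rw [map_mul, map_pow, map_pow, hvu, hvuε, ← pow_add]
        apply le_of_eq
        congr 1
        have := Finset.mem_range.mp hi
        omega
      calc v (∑ i ∈ Finset.range d, (u + ε) ^ i * u ^ (d - 1 - i)) * v ε
          ≤ v α ^ (d - 1) * v ε := mul_le_mul_of_nonneg_right hsle (v.nonneg _)
        _ < v α ^ (d - 1) * v α := mul_lt_mul_of_pos_left hγ₀ (pow_pos hα0 _)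
        _ = v α ^ d := by rw [← pow_succ]; congr 1; omega
    calc v (g^[2] β) ≤ max (v ((u + ε) ^ d - u ^ d)) (v (γ₁ * α)) := by rw [h2]; exact hv _ _
      _ < v α ^ d := max_lt hdiffbound (lt_of_le_of_lt hγ₁α hαd)
  -- β part
  have hlogα : 0 < Real.log (v α) := Real.log_pos hbig
  have partβ : ∀ c : ℝ, Tendsto (fun n : ℕ => Real.log (max (v (g^[n] β)) 1) / (d:ℝ) ^ n)
      atTop (nhds c) → c < Real.log (v α) / d := by
    intro c hc
    by_cases hbdd : ∀ n, v (g^[n] β) ≤ v α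
    · have h0 : Tendsto (fun n : ℕ => Real.log (max (v (g^[n] β)) 1) / (d:ℝ) ^ n) atTop
          (nhds 0) := by
        apply squeeze_zero (g := fun n : ℕ => Real.log (v α) / (d:ℝ) ^ n)
        · intro n
          exact div_nonneg (Real.log_nonneg (le_max_right _ _)) (by positivity)
        · intro n
          have hle : max (v (g^[n] β)) 1 ≤ v α := max_le (hbdd n) hbig.le
          gcongr
        · have h1 : Tendsto (fun n : ℕ => ((d:ℝ)⁻¹) ^ n) atTop (nhds 0) :=
            tendsto_pow_atTop_nhds_zero_of_lt_one (by positivity)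
              (inv_lt_one_of_one_lt₀ hdR)
          have h2 := h1.const_mul (Real.log (v α))
          rw [mul_zero] at h2
          apply h2.congr
          intro n
          rw [inv_pow, ← div_eq_mul_inv]
      have hc0 : c = 0 := tendsto_nhds_unique hc h0
      rw [hc0]
      exact div_pos hlogα (by positivity)
    · push_neg at hbdd
      obtain ⟨n₀, hn₀, hmin⟩ : ∃ n, v α < v (g^[n] β) ∧ ∀ m, m < n → v (g^[m] β) ≤ v α :=
        ⟨Nat.find hbdd, Nat.find_spec hbdd, fun m hm => le_of_not_gt (Nat.find_min hbdd hm)⟩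
      have hVpos : 0 < v (g^[n₀] β) := lt_trans hα0 hn₀
      have h2le : 2 ≤ n₀ := by
        by_contra hc2
        push_neg at hc2
        interval_cases n₀
        · rw [Function.iterate_zero, id_eq, ← heq] at hn₀; exact lt_irrefl _ hn₀
        · rw [Function.iterate_one, hvgβ] at hn₀; exact lt_irrefl _ hn₀
      have hVle : v (g^[n₀] β) ≤ v α ^ d := by
        have h1 : g^[n₀] β = g (g^[n₀ - 1] β) := by
          conv_lhs => rw [show n₀ = (n₀ - 1) + 1 by omega]
          rw [Function.iterate_succ_apply']
        rw [h1, hgx]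
        refine (hv _ _).trans (max_le ?_ ?_)
        · rw [map_pow]
          exact pow_le_pow_left₀ (v.nonneg _) (hmin _ (by omega)) d
        · rw [hvlam]
      have hceq : c = Real.log (v (g^[n₀] β)) / (d:ℝ) ^ n₀ :=
        tendsto_nhds_unique hc (hlim β n₀ hn₀)
      rw [hceq]
      rcases eq_or_lt_of_le h2le with h2 | h3
      · subst h2
        have hlt : Real.log (v (g^[2] β)) < d * Real.log (v α) := by
          rw [← Real.log_pow]
          exact Real.log_lt_log hVpos hβ2lt
        calc Real.log (v (g^[2] β)) / (d:ℝ) ^ 2 < (d * Real.log (v α)) / (d:ℝ) ^ 2 :=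
              (div_lt_div_iff_of_pos_right (by positivity)).mpr hlt
          _ = Real.log (v α) / d := by
              have : (d:ℝ) ≠ 0 := by positivity
              field_simp
      · have hle2 : Real.log (v (g^[n₀] β)) ≤ d * Real.log (v α) := by
          rw [← Real.log_pow]
          exact Real.log_le_log hVpos hVle
        calc Real.log (v (g^[n₀] β)) / (d:ℝ) ^ n₀ ≤ (d * Real.log (v α)) / (d:ℝ) ^ n₀ := by
              gcongr
          _ = Real.log (v α) / (d:ℝ) ^ (n₀ - 1) := by
              rw [show ((d:ℝ)) ^ n₀ = (d:ℝ) * (d:ℝ) ^ (n₀ - 1) by rw [← pow_succ']; congr 1; omega]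
              rw [mul_div_mul_left _ _ (by positivity : (d:ℝ) ≠ 0)]
          _ < Real.log (v α) / (d:ℝ) := by
              refine div_lt_div_of_pos_left hlogα (by positivity) ?_
              calc (d:ℝ) = (d:ℝ) ^ 1 := (pow_one _).symm
                _ < (d:ℝ) ^ (n₀ - 1) := pow_lt_pow_right₀ hdR (by omega)
  exact ⟨partα, partβ, fun h => lt_irrefl _ (partβ _ h)⟩
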